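/- For integers n ≥ m ≥ 1, the quantity E[C_{n,m}] := 2·[n + 3 + (n+1)·h_n − (m+2)·h_m − (n−m+3)·h_{n−m+1}] satisfies E[C_{n,m}] ≤ 4n. -/

import Mathlib

/-- h_k is the k-th harmonic number. -/
noncomputable def harm (k : ℕ) : ℝ := ∑ j ∈ Finset.Icc 1 k, (1 : ℝ) / j

lemma harm_ge_one {m : ℕ} (hm : 1 ≤ m) : 1 ≤ harm m := by
  have h1 : (1 : ℕ) ∈ Finset.Icc 1 m := by simp [hm]
  have := Finset.single_le_sum (f := fun j : ℕ => (1:ℝ)/j)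
    (fun i _ => by positivity) h1
  simpa [harm] using this

lemma harm_diff {m n : ℕ} (h : m ≤ n) :
    harm n - harm m = ∑ j ∈ Finset.Icc (m+1) n, (1:ℝ)/j := by
  unfold harm
  rw [sub_eq_iff_eq_add']
  have hdisj : Disjoint (Finset.Icc 1 m) (Finset.Icc (m+1) n) := by
    rw [Finset.disjoint_left]
    intro a ha hb
    simp only [Finset.mem_Icc] at ha hb
    omega
  rw [← Finset.sum_union hdisj]
  congr 1
  ext j
  simp only [Finset.mem_union, Finset.mem_Icc]
  omega

lemma key {m n : ℕ} (hm : 1 ≤ m) (h : m ≤ n) :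
    (m:ℝ) * (harm n - harm m) ≤ (n:ℝ) - m := by
  have hmR : (0:ℝ) < m := by exact_mod_cast hm
  rw [harm_diff h]
  have hb : ∑ j ∈ Finset.Icc (m+1) n, (1:ℝ)/j
      ≤ ∑ _j ∈ Finset.Icc (m+1) n, (1:ℝ)/m := by
    apply Finset.sum_le_sum
    intro i hi
    simp only [Finset.mem_Icc] at hi
    apply one_div_le_one_div_of_le hmR
    exact_mod_cast le_trans (Nat.le_succ m) hi.1
  have hcard : (Finset.Icc (m+1) n).card = n - m := by
    rw [Nat.card_Icc]; omega
  rw [Finset.sum_const, hcard] at hb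
  have : (m:ℝ) * (∑ j ∈ Finset.Icc (m+1) n, (1:ℝ)/j)
      ≤ (m:ℝ) * ((n - m : ℕ) • ((1:ℝ)/m)) :=
    mul_le_mul_of_nonneg_left hb hmR.le
  calc (m:ℝ) * (∑ j ∈ Finset.Icc (m+1) n, (1:ℝ)/j)
      ≤ (m:ℝ) * ((n - m : ℕ) • ((1:ℝ)/m)) := this
    _ = ((n - m : ℕ) : ℝ) := by
        rw [nsmul_eq_mul]; field_simp
    _ = (n:ℝ) - m := by
        rw [Nat.cast_sub h]

theorem stmt_7 (n m : ℕ) (hm : 1 ≤ m) (hnm : m ≤ n) :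
    2 * ((n : ℝ) + 3 + ((n : ℝ) + 1) * harm n - ((m : ℝ) + 2) * harm m
      - ((n : ℝ) - m + 3) * harm (n - m + 1)) ≤ 4 * n := by
  set k := n - m + 1 with hk
  have hk1 : 1 ≤ k := by omega
  have hkn : k ≤ n := by omega
  have hkR : (k:ℝ) = (n:ℝ) - m + 1 := by
    rw [hk]; push_cast [Nat.cast_sub hnm]; ring
  have A := key hm hnm
  have B := key hk1 hkn
  have C := harm_ge_one hm
  have D := harm_ge_one hk1
  have E : ((n:ℝ)+1) * harm n = (m:ℝ) * harm n + (k:ℝ) * harm n := by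
    rw [hkR]; ring
  rw [mul_sub] at A B
  rw [hkR] at B
  nlinarith [A, B, C, D, E]
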